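/- arXiv:2407.05541 — 10 statements merged into one kernel-verified Lean document; each statement's English description precedes it below -/
import Mathlib

section
/- If for some fixed θ ∈ [0, 2π) the relation ⊥_{T_θ} is left symmetric at x (i.e., (T_θ x, y) = 0 implies (T_θ y, x) = 0 for all y), then ⊥_T is left symmetric at x (i.e., (Tx)(y) = 0 implies (Ty)(x) = 0 for all y). -/
open NormedSpace

/-- `(T_θ x, y) = cos θ · Re (Tx)(y) + sin θ · Im (Tx)(y)`. -/
noncomputable def Tangle {X : Type*} [NormedAddCommGroup X] [NormedSpace ℂ X]
    (T : X →L[ℂ] StrongDual ℂ X) (θ : ℝ) (x y : X) : ℝ :=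
  Real.cos θ * (T x y).re + Real.sin θ * (T x y).im

theorem stmt4 {X : Type*} [NormedAddCommGroup X] [NormedSpace ℂ X] [CompleteSpace X]
    (T : X →L[ℂ] StrongDual ℂ X) (x : X) (θ : ℝ) (hθ : θ ∈ Set.Ico 0 (2 * Real.pi))
    (hleft : ∀ y : X, Tangle T θ x y = 0 → Tangle T θ y x = 0) :
    ∀ y : X, T x y = 0 → T y x = 0 := by
  intro y hxy
  have h1 : Tangle T θ y x = 0 := by
    apply hleft
    simp [Tangle, hxy]
  have hxy' : T x (Complex.I • y) = 0 := by
    simp [hxy]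
  have h2 : Tangle T θ (Complex.I • y) x = 0 := by
    apply hleft
    simp [Tangle, hxy']
  have hIy : T (Complex.I • y) x = Complex.I * T y x := by
    simp
  simp only [Tangle, hIy, Complex.mul_re, Complex.mul_im, Complex.I_re, Complex.I_im] at h1 h2
  have hs := Real.sin_sq_add_cos_sq θ
  have hre : (T y x).re = 0 := by
    linear_combination Real.cos θ * h1 + Real.sin θ * h2 - (T y x).re * hs
  have him : (T y x).im = 0 := by
    linear_combination Real.sin θ * h1 - Real.cos θ * h2 - (T y x).im * hs
  exact Complex.ext hre him
end

section
/- Let x ∈ X be a nonisotropic vector, i.e., (Tx)(x) ≠ 0. Then ⊥_T is left symmetric at x if and only if ⊥_T is right symmetric at x. -/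
open NormedSpace

theorem stmt5 {X : Type*} [NormedAddCommGroup X] [NormedSpace ℂ X] [CompleteSpace X]
    (T : X →L[ℂ] StrongDual ℂ X) (x : X) (hx : T x x ≠ 0) :
    (∀ y : X, T x y = 0 → T y x = 0) ↔ (∀ y : X, T y x = 0 → T x y = 0) := by
  constructor
  · intro h y hy
    set c : ℂ := T x y / T x x with hc
    have h1 : T x (y - c • x) = 0 := by
      have : T x (y - c • x) = T x y - c * T x x := by simp [smul_eq_mul]
      rw [this, hc, div_mul_cancel₀ _ hx, sub_self]
    have h2 := h (y - c • x) h1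
    have h3 : T (y - c • x) x = T y x - c * T x x := by
      simp [map_sub, map_smul, ContinuousLinearMap.sub_apply,
        ContinuousLinearMap.smul_apply, smul_eq_mul]
    rw [h3, hy, zero_sub, neg_eq_zero, mul_eq_zero] at h2
    rcases h2 with h2 | h2
    · rw [hc, div_eq_zero_iff] at h2
      rcases h2 with h2 | h2
      · exact h2
      · exact absurd h2 hx
    · exact absurd h2 hx
  · intro h y hy
    set c : ℂ := T y x / T x x with hc
    have h1 : T (y - c • x) x = 0 := by
      have : T (y - c • x) x = T y x - c * T x x := by
        simp [map_sub, map_smul, ContinuousLinearMap.sub_apply,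
          ContinuousLinearMap.smul_apply, smul_eq_mul]
      rw [this, hc, div_mul_cancel₀ _ hx, sub_self]
    have h2 := h (y - c • x) h1
    have h3 : T x (y - c • x) = T x y - c * T x x := by simp [smul_eq_mul]
    rw [h3, hy, zero_sub, neg_eq_zero, mul_eq_zero] at h2
    rcases h2 with h2 | h2
    · rw [hc, div_eq_zero_iff] at h2
      rcases h2 with h2 | h2
      · exact h2
      · exact absurd h2 hx
    · exact absurd h2 hx
end

section
/- Suppose T : X → X* is bijective and x ∈ X is a nonzero isotropic vector, i.e., x ≠ 0 and (Tx)(x) = 0. Then ⊥_T is left symmetric at x if and only if ⊥_T is right symmetric at x. -/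
open NormedSpace

theorem stmt6 {X : Type*} [NormedAddCommGroup X] [NormedSpace ℂ X] [CompleteSpace X]
    (T : X →L[ℂ] StrongDual ℂ X) (hT : Function.Bijective T)
    (x : X) (hx : x ≠ 0) (hiso : T x x = 0) :
    (∀ y : X, T x y = 0 → T y x = 0) ↔ (∀ y : X, T y x = 0 → T x y = 0) := by
  have hf : ∃ z, T x z ≠ 0 := by
    by_contra h
    push_neg at h
    apply hx
    apply hT.1
    ext z
    simp [h z]
  have hg : ∃ z, T z x ≠ 0 := by
    obtain ⟨φ, _, hφ⟩ := exists_dual_vector ℂ x (norm_ne_zero_iff.mpr hx)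
    obtain ⟨z, hz⟩ := hT.2 φ
    refine ⟨z, ?_⟩
    rw [hz, hφ]
    simpa using hx
  constructor
  · intro hL y hy
    by_contra hne
    obtain ⟨z, hz⟩ := hg
    have hw : T x (z - (T x z / T x y) • y) = 0 := by
      simp only [map_sub, map_smul, smul_eq_mul]
      field_simp
      simp
    have h2 := hL _ hw
    simp only [map_sub, map_smul, ContinuousLinearMap.sub_apply,
      ContinuousLinearMap.smul_apply, smul_eq_mul, hy, mul_zero, sub_zero] at h2
    exact hz h2
  · intro hR y hy
    by_contra hne
    obtain ⟨z, hz⟩ := hf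
    have hw : T (z - (T z x / T y x) • y) x = 0 := by
      simp only [map_sub, map_smul, ContinuousLinearMap.sub_apply,
        ContinuousLinearMap.smul_apply, smul_eq_mul]
      field_simp
      simp
    have h2 := hR _ hw
    simp only [map_sub, map_smul, smul_eq_mul, hy, mul_zero, sub_zero] at h2
    exact hz h2
end

section
/- Let x ∈ X be nonisotropic, i.e., (Tx)(x) ≠ 0, and suppose ⊥_T is left symmetric at x. Then (Tx)(y) = (Ty)(x) for all y ∈ X. -/
open NormedSpace

theorem stmt7 {X : Type*} [NormedAddCommGroup X] [NormedSpace ℂ X] [CompleteSpace X]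
    (T : X →L[ℂ] StrongDual ℂ X) (x : X) (hx : T x x ≠ 0)
    (hleft : ∀ y : X, T x y = 0 → T y x = 0) :
    ∀ y : X, T x y = T y x := by
  intro y
  set c : ℂ := T x y / T x x with hc
  have h1 : T x (y - c • x) = 0 := by
    simp [hc, map_sub, map_smul, div_mul_cancel₀ _ hx]
  have h2 := hleft _ h1
  have : T y x - c * T x x = 0 := by
    simpa [map_sub, map_smul, sub_eq_zero] using h2
  have hcx : c * T x x = T x y := div_mul_cancel₀ _ hx
  rw [hcx] at this
  linear_combination -this
end

section
/- Let T : X → X* be a nonzero bounded linear operator. Then T is symmetric (i.e., (Tx)(y) = (Ty)(x) for all x, y) if and only if (i) there exists a nonisotropic vector x ∈ X (i.e., (Tx)(x) ≠ 0), and (ii) ⊥_T is left symmetric at every nonisotropic vector y ∈ X. -/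
open NormedSpace

theorem stmt8 {X : Type*} [NormedAddCommGroup X] [NormedSpace ℂ X] [CompleteSpace X]
    (T : X →L[ℂ] StrongDual ℂ X) (hT : T ≠ 0) :
    (∀ x y : X, T x y = T y x) ↔
      ((∃ x : X, T x x ≠ 0) ∧
        ∀ y : X, T y y ≠ 0 → ∀ z : X, T y z = 0 → T z y = 0) := by
  constructor
  · intro hsym
    refine ⟨?_, fun y _ z hz => by rw [hsym]; exact hz⟩
    by_contra h
    push_neg at h
    apply hT
    ext x y
    have hxy : T (x + y) (x + y) = 0 := h _
    simp only [map_add, ContinuousLinearMap.add_apply] at hxy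
    rw [h x, h y, hsym y x] at hxy
    have : T x y = 0 := by
      have : (2 : ℂ) * T x y = 0 := by linear_combination hxy
      exact (mul_eq_zero.mp this).resolve_left two_ne_zero
    simpa using this
  · rintro ⟨⟨x₀, hx₀⟩, hls⟩
    have key : ∀ y : X, T y y ≠ 0 → ∀ z : X, T z y = T y z := by
      intro y hy z
      have hw : T y (z - (T y z / T y y) • y) = 0 := by
        simp only [map_sub, map_smul, smul_eq_mul]
        field_simp
        ring
      have h2 := hls y hy _ hw
      simp only [map_sub, map_smul, ContinuousLinearMap.sub_apply,
        ContinuousLinearMap.smul_apply, smul_eq_mul] at h2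
      have : T z y = (T y z / T y y) * T y y := by linear_combination h2
      rw [this]
      field_simp
    have exp : ∀ (y : X) (t : ℂ), T (y + t • x₀) (y + t • x₀) =
        T y y + t * T y x₀ + t * T x₀ y + t * t * T x₀ x₀ := by
      intro y t
      simp only [map_add, map_smul, ContinuousLinearMap.add_apply,
        ContinuousLinearMap.smul_apply, smul_eq_mul]
      ring
    intro x y
    obtain ⟨t, ht⟩ : ∃ t : ℂ, T (y + t • x₀) (y + t • x₀) ≠ 0 := by
      by_contra h
      push_neg at h
      have e0 := h 0; have e1 := h 1; have e2 := h 2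
      rw [exp] at e0 e1 e2
      apply hx₀
      linear_combination (e2 - 2*e1 + e0)/2
    have h1 := key _ ht x
    have h2 := key x₀ hx₀ x
    have e1 : T x (y + t • x₀) = T x y + t * T x x₀ := by
      simp only [map_add, map_smul, smul_eq_mul]
    have e2 : T (y + t • x₀) x = T y x + t * T x₀ x := by
      simp only [map_add, map_smul, ContinuousLinearMap.add_apply,
        ContinuousLinearMap.smul_apply, smul_eq_mul]
    rw [e1, e2] at h1
    linear_combination h1 - t * h2
end

section
/- ⊥_T is left symmetric at x ∈ X if and only if there exists φ₀ ∈ [0, 2π) such that for every θ ∈ [0, 2π) and every y ∈ X: (T_θ x, y) ≥ 0 implies (T_{θ-φ₀} y, x) ≥ 0, and (T_θ x, y) ≤ 0 implies (T_{θ-φ₀} y, x) ≤ 0. -/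
open NormedSpace

lemma tangle_re {X : Type*} [NormedAddCommGroup X] [NormedSpace ℂ X]
    (T : X →L[ℂ] StrongDual ℂ X) (θ : ℝ) (x y : X) :
    Tangle T θ x y = (Complex.exp (-(θ : ℂ) * Complex.I) * T x y).re := by
  rw [show (-(θ:ℂ)) = ((-θ : ℝ) : ℂ) by push_cast; ring, Complex.mul_re,
    Complex.exp_ofReal_mul_I_re, Complex.exp_ofReal_mul_I_im, Real.cos_neg, Real.sin_neg, Tangle]
  ring

theorem stmt12 {X : Type*} [NormedAddCommGroup X] [NormedSpace ℂ X] [CompleteSpace X]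
    (T : X →L[ℂ] StrongDual ℂ X) (x : X) :
    (∀ y : X, T x y = 0 → T y x = 0) ↔
      ∃ φ₀ : ℝ, φ₀ ∈ Set.Ico 0 (2 * Real.pi) ∧
        ∀ θ : ℝ, θ ∈ Set.Ico 0 (2 * Real.pi) → ∀ y : X,
          (0 ≤ Tangle T θ x y → 0 ≤ Tangle T (θ - φ₀) y x) ∧
          (Tangle T θ x y ≤ 0 → Tangle T (θ - φ₀) y x ≤ 0) := by
  have two_pi_pos : (0 : ℝ) < 2 * Real.pi := by positivity
  constructor
  · intro h
    -- First obtain λ with ∀ y, T y x = λ * T x y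
    obtain ⟨l, hl⟩ : ∃ l : ℂ, ∀ y : X, T y x = l * T x y := by
      by_cases hz : ∃ z : X, T x z ≠ 0
      · obtain ⟨z, hz⟩ := hz
        refine ⟨T z x / T x z, fun y => ?_⟩
        have h1 : T x (y - (T x y / T x z) • z) = 0 := by
          rw [map_sub, map_smul]
          rw [smul_eq_mul, div_mul_cancel₀ _ hz, sub_self]
        have h2 := h _ h1
        rw [map_sub, map_smul] at h2
        simp only [ContinuousLinearMap.sub_apply, ContinuousLinearMap.smul_apply,
          smul_eq_mul] at h2
        have h3 : T y x = (T x y / T x z) * T z x := by linear_combination h2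
        rw [h3]; field_simp
      · push_neg at hz
        refine ⟨0, fun y => ?_⟩
        simp [h y (hz y)]
    by_cases hl0 : l = 0
    · refine ⟨0, ⟨le_refl _, two_pi_pos⟩, fun θ _ y => ?_⟩
      have : T y x = 0 := by rw [hl y, hl0, zero_mul]
      constructor <;> intro _ <;> simp [Tangle, this]
    · -- choose φ₀ ≡ -arg l (mod 2π), in [0, 2π)
      set φ₀ := toIcoMod two_pi_pos 0 (-Complex.arg l) with hφ₀def
      have hmem : φ₀ ∈ Set.Ico (0 : ℝ) (2 * Real.pi) := toIcoMod_mem_Ico' two_pi_pos _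
      have hexp : Complex.exp ((φ₀ : ℂ) * Complex.I) * l = ‖l‖ := by
        have hdiv : φ₀ = -Complex.arg l - toIcoDiv two_pi_pos 0 (-Complex.arg l) • (2 * Real.pi) :=
          rfl
        set k : ℤ := toIcoDiv two_pi_pos 0 (-Complex.arg l)
        have : (φ₀ : ℂ) = -Complex.arg l - k * (2 * Real.pi) := by
          rw [hdiv]; push_cast [zsmul_eq_mul]; ring
        rw [this]
        rw [show (-(Complex.arg l : ℂ) - k * (2 * Real.pi)) * Complex.I
            = -(Complex.arg l : ℂ) * Complex.I + ((-k : ℤ) : ℂ) * (2 * Real.pi * Complex.I) by push_cast; ring]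
        rw [Complex.exp_add, Complex.exp_int_mul_two_pi_mul_I (-k), mul_one]
        calc Complex.exp (-(Complex.arg l : ℂ) * Complex.I) * l
            = Complex.exp (-(Complex.arg l : ℂ) * Complex.I) *
              ((‖l‖ : ℂ) * Complex.exp ((Complex.arg l : ℂ) * Complex.I)) := by
              rw [Complex.norm_mul_exp_arg_mul_I l]
          _ = (‖l‖ : ℂ) * Complex.exp (-(Complex.arg l : ℂ) * Complex.I
              + (Complex.arg l : ℂ) * Complex.I) := by rw [Complex.exp_add]; ring
          _ = ‖l‖ := by simp
      refine ⟨φ₀, hmem, fun θ _ y => ?_⟩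
      have key : Tangle T (θ - φ₀) y x = ‖l‖ * Tangle T θ x y := by
        rw [tangle_re, tangle_re, hl y]
        have : Complex.exp (-((θ : ℂ) - φ₀) * Complex.I) * (l * T x y)
            = (‖l‖ : ℂ) * (Complex.exp (-(θ : ℂ) * Complex.I) * T x y) := by
          rw [show (-((θ : ℂ) - φ₀) * Complex.I) = (-(θ:ℂ) * Complex.I) + ((φ₀:ℂ) * Complex.I) by ring]
          rw [Complex.exp_add]
          rw [show Complex.exp (-(θ:ℂ) * Complex.I) * Complex.exp ((φ₀:ℂ) * Complex.I) * (l * T x y)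
            = (Complex.exp ((φ₀:ℂ) * Complex.I) * l) * (Complex.exp (-(θ:ℂ) * Complex.I) * T x y) by ring]
          rw [hexp]
        push_cast at this ⊢
        rw [this]
        simp [Complex.mul_re]
      rw [key]
      constructor
      · intro hle; exact mul_nonneg (norm_nonneg l) hle
      · intro hle; exact mul_nonpos_of_nonneg_of_nonpos (norm_nonneg l) hle
  · rintro ⟨φ₀, hφ₀, hmain⟩ y hxy
    -- Tangle T θ x y = 0 for all θ
    have hTz : ∀ θ : ℝ, θ ∈ Set.Ico 0 (2 * Real.pi) → Tangle T (θ - φ₀) y x = 0 := by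
      intro θ hθ
      have h0 : Tangle T θ x y = 0 := by simp [Tangle, hxy]
      have := hmain θ hθ y
      exact le_antisymm (this.2 h0.le) (this.1 h0.ge)
    -- evaluate at two angles
    have key : ∀ ψ : ℝ, Tangle T ψ y x = 0 := by
      intro ψ
      set θ := toIcoMod two_pi_pos 0 (ψ + φ₀) with hθdef
      have hθmem : θ ∈ Set.Ico (0:ℝ) (2 * Real.pi) := toIcoMod_mem_Ico' two_pi_pos _
      have h := hTz θ hθmem
      set k : ℤ := toIcoDiv two_pi_pos 0 (ψ + φ₀)
      have hθeq : θ - φ₀ = ψ - k * (2 * Real.pi) := by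
        have : θ = ψ + φ₀ - k • (2 * Real.pi) := rfl
        rw [this]; push_cast [zsmul_eq_mul]; ring
      rw [hθeq] at h
      rw [show ψ - k * (2 * Real.pi) = ψ + ((-k : ℤ) : ℝ) * (2 * Real.pi) by push_cast; ring] at h
      rwa [Tangle, Real.cos_add_int_mul_two_pi, Real.sin_add_int_mul_two_pi] at h
    have h1 := key 0
    have h2 := key (Real.pi / 2)
    simp [Tangle] at h1 h2
    exact Complex.ext h1 h2
end

section
/- Let X be a real Banach space, T : X → X* bounded linear, and x ∈ X. Then ⊥_T is left symmetric at x if and only if either (i) for all y: (Tx)(y) ≥ 0 implies (Ty)(x) ≥ 0 and (Tx)(y) ≤ 0 implies (Ty)(x) ≤ 0, or (ii) for all y: (Tx)(y) ≥ 0 implies (Ty)(x) ≤ 0 and (Tx)(y) ≤ 0 implies (Ty)(x) ≥ 0. -/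
open NormedSpace

theorem stmt13 {X : Type*} [NormedAddCommGroup X] [NormedSpace ℝ X] [CompleteSpace X]
    (T : X →L[ℝ] StrongDual ℝ X) (x : X) :
    (∀ y : X, T x y = 0 → T y x = 0) ↔
      ((∀ y : X, (0 ≤ T x y → 0 ≤ T y x) ∧ (T x y ≤ 0 → T y x ≤ 0)) ∨
       (∀ y : X, (0 ≤ T x y → T y x ≤ 0) ∧ (T x y ≤ 0 → 0 ≤ T y x))) := by
  constructor
  · intro h
    by_cases hx : ∀ y, T x y = 0
    · left
      intro y
      have hy := h y (hx y)
      constructor <;> intro _ <;> simp [hy]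
    · push_neg at hx
      obtain ⟨z, hz⟩ := hx
      have key : ∀ y : X, T y x = T x y * (T z x / T x z) := by
        intro y
        have h0 : T x (y - (T x y / T x z) • z) = 0 := by
          rw [map_sub, map_smul, smul_eq_mul]
          rw [div_mul_cancel₀ _ hz, sub_self]
        have h1 := h _ h0
        rw [map_sub, ContinuousLinearMap.sub_apply, map_smul,
          ContinuousLinearMap.smul_apply] at h1
        have : T y x = (T x y / T x z) * T z x := by
          have := sub_eq_zero.mp h1
          simpa using this
        rw [this]; ring
      rcases le_or_gt 0 (T z x / T x z) with hc | hc
      · left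
        intro y
        rw [key y]
        exact ⟨fun hy => mul_nonneg hy hc, fun hy => mul_nonpos_of_nonpos_of_nonneg hy hc⟩
      · right
        intro y
        rw [key y]
        exact ⟨fun hy => mul_nonpos_of_nonneg_of_nonpos hy hc.le,
          fun hy => mul_nonneg_of_nonpos_of_nonpos hy hc.le⟩
  · intro h y hy
    rcases h with h | h <;>
      · obtain ⟨h1, h2⟩ := h y
        have := h1 hy.ge
        have := h2 hy.le
        linarith
end

section
/- Let T : X → X* be bijective and x ∈ X nonzero. Then x is a smooth point of X if and only if there exists z ∈ X, unique up to nonzero scalar multiplication, such that {y : (Tz)(y) = 0} = {y : x ⊥_B y}. -/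
open NormedSpace

/-- A supporting functional vanishes only on Birkhoff-James orthogonal vectors. -/
lemma aux_ortho_of_ker {X : Type*} [NormedAddCommGroup X] [NormedSpace ℂ X]
    (f : StrongDual ℂ X) (x : X) (hfx : f x = ((‖x‖ * ‖x‖ : ℝ) : ℂ)) (hfn : ‖f‖ ≤ ‖x‖)
    {y : X} (hy : f y = 0) : ∀ lam : ℂ, ‖x‖ ≤ ‖x + lam • y‖ := by
  intro lam
  rcases eq_or_lt_of_le (norm_nonneg x) with h0 | h0
  · rw [← h0]; exact norm_nonneg _
  have h1 : f (x + lam • y) = f x := by simp [map_add, map_smul, hy]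
  have h2 : ‖f (x + lam • y)‖ ≤ ‖f‖ * ‖x + lam • y‖ := f.le_opNorm _
  rw [h1, hfx] at h2
  have h3 : ‖((‖x‖ * ‖x‖ : ℝ) : ℂ)‖ = ‖x‖ * ‖x‖ := by
    rw [Complex.norm_real, Real.norm_eq_abs, abs_of_nonneg (by positivity)]
  rw [h3] at h2
  have h4 : ‖f‖ * ‖x + lam • y‖ ≤ ‖x‖ * ‖x + lam • y‖ :=
    mul_le_mul_of_nonneg_right hfn (norm_nonneg _)
  nlinarith [norm_nonneg (x + lam • y)]

/-- If `x ⊥_B y` then there is a supporting functional at `x` vanishing at `y`. -/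
lemma aux_exists_support_vanish {X : Type*} [NormedAddCommGroup X] [NormedSpace ℂ X]
    [CompleteSpace X] (x y : X) (hx : x ≠ 0) (hy : ∀ lam : ℂ, ‖x‖ ≤ ‖x + lam • y‖) :
    ∃ f : StrongDual ℂ X, f x = ((‖x‖ * ‖x‖ : ℝ) : ℂ) ∧ ‖f‖ = ‖x‖ ∧ f y = 0 := by
  set U : Submodule ℂ X := Submodule.span ℂ {y} with hU
  haveI : FiniteDimensional ℂ U := by
    apply FiniteDimensional.span_of_finite
    exact Set.finite_singleton y
  haveI : IsClosed (U : Set X) := Submodule.closed_of_finiteDimensional U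
  -- the norm of `mk x` in the quotient is `‖x‖`
  have hle : ‖(Submodule.Quotient.mk x : X ⧸ U)‖ ≤ ‖x‖ := Submodule.Quotient.norm_mk_le U x
  have hge : ‖x‖ ≤ ‖(Submodule.Quotient.mk x : X ⧸ U)‖ := by
    by_contra hcon
    push_neg at hcon
    obtain ⟨m, hm, hmlt⟩ := Submodule.Quotient.norm_mk_lt
      (Submodule.Quotient.mk x : X ⧸ U) (sub_pos.mpr hcon)
    have hmem : m - x ∈ U := (Submodule.Quotient.eq U).mp hm
    rw [hU, Submodule.mem_span_singleton] at hmem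
    obtain ⟨a, ha⟩ := hmem
    have : m = x + a • y := by rw [ha]; abel
    rw [this] at hmlt
    have := hy a
    linarith
  have hnorm : ‖(Submodule.Quotient.mk x : X ⧸ U)‖ = ‖x‖ := le_antisymm hle hge
  have hne : (Submodule.Quotient.mk x : X ⧸ U) ≠ 0 := by
    intro h
    rw [h, norm_zero] at hnorm
    exact hx (norm_eq_zero.mp hnorm.symm)
  obtain ⟨g, hg1, hg2⟩ := exists_dual_vector ℂ (Submodule.Quotient.mk x : X ⧸ U) (norm_ne_zero_iff.mpr hne)
  -- continuous quotient map
  let π : X →L[ℂ] (X ⧸ U) := LinearMap.mkContinuous U.mkQ 1 (by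
    intro v
    simpa using Submodule.Quotient.norm_mk_le U v)
  have hπ : ∀ v : X, π v = Submodule.Quotient.mk v := fun v => rfl
  refine ⟨((‖x‖ : ℂ)) • (g.comp π), ?_, ?_, ?_⟩
  · simp only [ContinuousLinearMap.smul_apply, ContinuousLinearMap.comp_apply, hπ, hg2, hnorm,
      smul_eq_mul]
    simp only [RCLike.ofReal_alg, Complex.real_smul, mul_one]
    push_cast
    ring
  · apply le_antisymm
    · apply ContinuousLinearMap.opNorm_le_bound _ (norm_nonneg x)
      intro v
      have h1 : ‖g (π v)‖ ≤ ‖g‖ * ‖π v‖ := g.le_opNorm _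
      have h2 : ‖π v‖ ≤ ‖v‖ := by
        rw [hπ]; exact Submodule.Quotient.norm_mk_le U v
      simp only [ContinuousLinearMap.smul_apply, ContinuousLinearMap.comp_apply, norm_smul,
        Complex.norm_real, Real.norm_eq_abs, abs_of_nonneg (norm_nonneg x)]
      rw [hg1] at h1
      nlinarith [norm_nonneg (g (π v)), norm_nonneg x]
    · have hval : ‖(((‖x‖ : ℂ)) • (g.comp π)) x‖ = ‖x‖ * ‖x‖ := by
        simp only [ContinuousLinearMap.smul_apply, ContinuousLinearMap.comp_apply, hπ, hg2, hnorm]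
        rw [norm_smul]
        simp [Complex.norm_real, abs_of_nonneg (norm_nonneg x), hnorm]
      have := (((‖x‖ : ℂ)) • (g.comp π)).le_opNorm x
      rw [hval] at this
      have hx0 : (0:ℝ) < ‖x‖ := norm_pos_iff.mpr hx
      nlinarith
  · simp only [ContinuousLinearMap.smul_apply, ContinuousLinearMap.comp_apply, hπ]
    have : (Submodule.Quotient.mk y : X ⧸ U) = 0 := by
      rw [Submodule.Quotient.mk_eq_zero]
      exact Submodule.mem_span_singleton_self y
    rw [this, map_zero, smul_zero]

/-- Functionals with nested kernels are proportional. -/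
lemma aux_eq_smul_of_ker {X : Type*} [NormedAddCommGroup X] [NormedSpace ℂ X]
    {f g : StrongDual ℂ X} (hf : f ≠ 0) (h : ∀ v, f v = 0 → g v = 0) : ∃ c : ℂ, g = c • f := by
  obtain ⟨x₀, hx₀⟩ : ∃ x₀, f x₀ ≠ 0 := by
    by_contra hcon
    push_neg at hcon
    exact hf (by ext v; simp [hcon v])
  refine ⟨g x₀ / f x₀, ?_⟩
  ext v
  have hker : f (v - (f v / f x₀) • x₀) = 0 := by
    simp [map_sub, map_smul, smul_eq_mul]
    field_simp
    ring
  have := h _ hker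
  simp only [map_sub, map_smul, smul_eq_mul, sub_eq_zero] at this
  simp only [ContinuousLinearMap.smul_apply, smul_eq_mul]
  rw [this]
  field_simp

set_option maxHeartbeats 1000000 in
theorem stmt15 {X : Type*} [NormedAddCommGroup X] [NormedSpace ℂ X] [CompleteSpace X]
    (T : X →L[ℂ] StrongDual ℂ X) (hT : Function.Bijective T) (x : X) (hx : x ≠ 0) :
    (∃! f : StrongDual ℂ X, f x = ((‖f‖ * ‖x‖ : ℝ) : ℂ) ∧ ‖f‖ = ‖x‖) ↔
      ∃ z : X,
        ({y : X | T z y = 0} = {y : X | ∀ lam : ℂ, ‖x‖ ≤ ‖x + lam • y‖}) ∧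
        ∀ w : X, ({y : X | T w y = 0} = {y : X | ∀ lam : ℂ, ‖x‖ ≤ ‖x + lam • y‖}) →
          ∃ c : ℂ, c ≠ 0 ∧ w = c • z := by
  have hxpos : (0:ℝ) < ‖x‖ := norm_pos_iff.mpr hx
  -- x is not Birkhoff orthogonal to itself
  have hxnot : ¬ (∀ lam : ℂ, ‖x‖ ≤ ‖x + lam • x‖) := by
    intro h
    have := h (-1)
    simp at this
    exact hx this
  constructor
  · rintro ⟨f, ⟨hfx, hfn⟩, huniq⟩
    have hfx' : f x = ((‖x‖ * ‖x‖ : ℝ) : ℂ) := by rw [hfx, hfn]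
    obtain ⟨z, hz⟩ := hT.2 f
    have hker : {y : X | T z y = 0} = {y : X | ∀ lam : ℂ, ‖x‖ ≤ ‖x + lam • y‖} := by
      ext y
      simp only [Set.mem_setOf_eq, hz]
      constructor
      · intro hy
        exact aux_ortho_of_ker f x hfx' (le_of_eq hfn) hy
      · intro hy
        obtain ⟨g, hg1, hg2, hg3⟩ := aux_exists_support_vanish x y hx hy
        have : g = f := huniq g ⟨by rw [hg1, hg2], hg2⟩
        rw [← this]; exact hg3
    refine ⟨z, hker, ?_⟩
    intro w hw
    have hTz : T z ≠ 0 := by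
      rw [hz]
      intro h
      rw [h] at hfx'
      simp only [ContinuousLinearMap.zero_apply] at hfx'
      have : (‖x‖ * ‖x‖ : ℝ) = 0 := by exact_mod_cast hfx'.symm
      nlinarith
    have hTwx : T w x ≠ 0 := by
      intro h
      have : x ∈ {y : X | T w y = 0} := h
      rw [hw] at this
      exact hxnot this
    have hsub : ∀ v, T z v = 0 → T w v = 0 := by
      intro v hv
      have : v ∈ {y : X | T z y = 0} := hv
      rw [hker, ← hw] at this
      exact this
    obtain ⟨c, hc⟩ := aux_eq_smul_of_ker hTz hsub
    have hc0 : c ≠ 0 := by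
      intro h
      rw [h] at hc
      replace hc := hc.trans (zero_smul ℂ (T z : X →L[ℂ] ℂ))
      exact hTwx (by rw [hc]; rfl)
    refine ⟨c, hc0, hT.1 ?_⟩
    rw [map_smul, hc]
  · rintro ⟨z, hz, -⟩
    have hTzx : T z x ≠ 0 := by
      intro h
      have : x ∈ {y : X | T z y = 0} := h
      rw [hz] at this
      exact hxnot this
    have hTz : T z ≠ 0 := fun h => hTzx (by rw [h]; rfl)
    -- existence
    obtain ⟨g, hg1, hg2⟩ := exists_dual_vector ℂ x (norm_ne_zero_iff.mpr hx)
    set f : StrongDual ℂ X := ((‖x‖ : ℂ)) • g with hf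
    have hfn : ‖f‖ = ‖x‖ := by
      rw [hf, norm_smul, hg1, mul_one, Complex.norm_real, Real.norm_eq_abs,
        abs_of_nonneg (norm_nonneg x)]
    have hfx : f x = ((‖f‖ * ‖x‖ : ℝ) : ℂ) := by
      rw [hfn, hf]
      simp only [ContinuousLinearMap.smul_apply, hg2, smul_eq_mul]
      simp only [RCLike.ofReal_alg, Complex.real_smul, mul_one]
      push_cast
      ring
    -- any supporting functional is proportional to T z with fixed normalization
    have key : ∀ h : StrongDual ℂ X, h x = ((‖h‖ * ‖x‖ : ℝ) : ℂ) ∧ ‖h‖ = ‖x‖ →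
        ∃ c : ℂ, c ≠ 0 ∧ T z = c • h := by
      rintro h ⟨hhx, hhn⟩
      have hhx' : h x = ((‖x‖ * ‖x‖ : ℝ) : ℂ) := by rw [hhx, hhn]
      have hh0 : h ≠ 0 := by
        intro h0
        rw [h0] at hhx'
        simp only [ContinuousLinearMap.zero_apply] at hhx'
        have : (‖x‖ * ‖x‖ : ℝ) = 0 := by exact_mod_cast hhx'.symm
        nlinarith
      have hsub : ∀ v, h v = 0 → T z v = 0 := by
        intro v hv
        have horth : ∀ lam : ℂ, ‖x‖ ≤ ‖x + lam • v‖ :=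
          aux_ortho_of_ker h x hhx' (le_of_eq hhn) hv
        have : v ∈ {y : X | ∀ lam : ℂ, ‖x‖ ≤ ‖x + lam • y‖} := horth
        rw [← hz] at this
        exact this
      obtain ⟨c, hc⟩ := aux_eq_smul_of_ker hh0 hsub
      refine ⟨c, ?_, hc⟩
      intro h0
      rw [h0] at hc
      replace hc := hc.trans (zero_smul ℂ (h : X →L[ℂ] ℂ))
      exact hTz hc
    refine ⟨f, ⟨hfx, hfn⟩, ?_⟩
    intro h hh
    obtain ⟨c, hc0, hc⟩ := key h hh
    obtain ⟨d, hd0, hd⟩ := key f ⟨hfx, hfn⟩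
    -- h = (d/c) • f
    have hhf : h = (d / c) • f := by
      have : c • h = d • f := by rw [← hc, ← hd]
      calc h = c⁻¹ • (c • h) := by rw [smul_smul, inv_mul_cancel₀ hc0, one_smul]
        _ = c⁻¹ • (d • f) := by rw [this]
        _ = (d / c) • f := by rw [smul_smul]; congr 1; field_simp
    -- evaluate at x to pin the scalar
    have hval : h x = (d / c) * f x := by
      rw [hhf, ContinuousLinearMap.smul_apply, smul_eq_mul]
    have hhx' : h x = ((‖x‖ * ‖x‖ : ℝ) : ℂ) := by rw [hh.1, hh.2]
    have hfx' : f x = ((‖x‖ * ‖x‖ : ℝ) : ℂ) := by rw [hfx, hfn]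
    have hne : ((‖x‖ * ‖x‖ : ℝ) : ℂ) ≠ 0 := by
      simp only [ne_eq, Complex.ofReal_eq_zero]
      exact (mul_pos hxpos hxpos).ne'
    have hdc : (d / c) = 1 := by
      rw [hhx', hfx'] at hval
      have h1 : (d / c) * ((‖x‖ * ‖x‖ : ℝ) : ℂ) = 1 * ((‖x‖ * ‖x‖ : ℝ) : ℂ) := by
        rw [one_mul, ← hval]
      exact mul_right_cancel₀ hne h1
    rw [hhf, hdc, one_smul]
end

section
/- Let T : X → X* be bijective and A : X → X a bounded linear operator. Then (for all x, y ∈ X: (Tx)(y) = 0 if and only if (TAx)(Ay) = 0) holds if and only if A is a nonzero scalar multiple of a T-isometry, i.e., there exists λ ∈ ℂ, λ ≠ 0, with T = λ A* T A, where A* : X* → X* is the adjoint of A. -/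
open NormedSpace

/-- Two continuous linear functionals with the same kernel are proportional
(with a nonzero constant), provided the first one is nonzero at some point. -/
lemma aux_prop {X : Type*} [NormedAddCommGroup X] [NormedSpace ℂ X]
    (f g : X →L[ℂ] ℂ) (u : X) (hu : f u ≠ 0)
    (hiff : ∀ y : X, f y = 0 ↔ g y = 0) :
    ∃ c : ℂ, c ≠ 0 ∧ ∀ y : X, g y = c * f y := by
  have hgu : g u ≠ 0 := fun h => hu ((hiff u).mpr h)
  refine ⟨g u / f u, div_ne_zero hgu hu, fun y => ?_⟩
  have hker : f (y - (f y / f u) • u) = 0 := by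
    simp [map_sub, map_smul, div_mul_cancel₀ _ hu]
  have hg : g (y - (f y / f u) • u) = 0 := (hiff _).mp hker
  have : g y = (f y / f u) * g u := by
    have := hg
    simp only [map_sub, map_smul, sub_eq_zero, smul_eq_mul] at this
    exact this
  rw [this]; ring

theorem stmt16 {X : Type*} [NormedAddCommGroup X] [NormedSpace ℂ X] [CompleteSpace X]
    (T : X →L[ℂ] StrongDual ℂ X) (hT : Function.Bijective T) (A : X →L[ℂ] X) :
    (∀ x y : X, T x y = 0 ↔ T (A x) (A y) = 0) ↔
      ∃ lam : ℂ, lam ≠ 0 ∧ ∀ x : X, T x = lam • ((T (A x)).comp A) := by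
  constructor
  · intro h
    -- injectivity of T on vectors
    have hTinj : ∀ x : X, T x = 0 → x = 0 := by
      intro x hx
      have := hT.1 (a₁ := x) (a₂ := 0) (by simpa using hx)
      simpa using this
    -- a nonzero vector gives a point where T x is nonzero
    have hex : ∀ x : X, x ≠ 0 → ∃ z : X, T x z ≠ 0 := by
      intro x hx
      by_contra hc
      push_neg at hc
      exact hx (hTinj x (by ext z; simpa using hc z))
    -- the proportionality constant exists for each nonzero x
    have key : ∀ x : X, x ≠ 0 → ∃ c : ℂ, c ≠ 0 ∧ ∀ z : X, T (A x) (A z) = c * T x z := by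
      intro x hx
      obtain ⟨u, hu⟩ := hex x hx
      exact aux_prop (T x) ((T (A x)).comp A) u hu (fun y => by simpa using h x y)
    by_cases hX : ∃ x₀ : X, x₀ ≠ 0
    · obtain ⟨x₀, hx₀⟩ := hX
      obtain ⟨c₀, hc₀, hP₀⟩ := key x₀ hx₀
      -- the constant is the same for every nonzero x
      have hconst : ∀ x : X, x ≠ 0 → ∀ z : X, T (A x) (A z) = c₀ * T x z := by
        intro x hx
        by_cases hsc : ∃ a : ℂ, x = a • x₀
        · obtain ⟨a, rfl⟩ := hsc
          intro z
          have : T (A (a • x₀)) (A z) = a * T (A x₀) (A z) := by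
            simp [map_smul]
          rw [this, hP₀ z]
          have : T (a • x₀) z = a * T x₀ z := by simp [map_smul]
          rw [this]; ring
        · push_neg at hsc
          obtain ⟨c, hc, hP⟩ := key x hx
          have hxx₀ : x + x₀ ≠ 0 := by
            intro hzero
            exact hsc (-1) (by rw [neg_one_smul]; exact eq_neg_of_add_eq_zero_left hzero)
          obtain ⟨c₁, hc₁, hP₁⟩ := key (x + x₀) hxx₀
          -- (c - c₁) * T x z + (c₀ - c₁) * T x₀ z = 0 for all z
          have hcomb : ∀ z : X, (c - c₁) * T x z + (c₀ - c₁) * T x₀ z = 0 := by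
            intro z
            have h1 : T (A (x + x₀)) (A z) = c * T x z + c₀ * T x₀ z := by
              have : T (A (x + x₀)) (A z) = T (A x) (A z) + T (A x₀) (A z) := by
                simp [map_add]
              rw [this, hP z, hP₀ z]
            have h2 : T (A (x + x₀)) (A z) = c₁ * (T x z + T x₀ z) := by
              rw [hP₁ z]
              simp [map_add]
            rw [h2] at h1
            linear_combination -h1
          have hcc₁ : c = c₁ := by
            by_contra hne
            have hk : ∀ z : X, T x z = ((c₁ - c₀) / (c - c₁)) * T x₀ z := by
              intro z
              have hz := hcomb z
              have hne' : c - c₁ ≠ 0 := sub_ne_zero.mpr hne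
              rw [div_mul_eq_mul_div, eq_div_iff hne']
              linear_combination hz
            have hTx : T x = T (((c₁ - c₀) / (c - c₁)) • x₀) := by
              ext z
              simp only [map_smul]
              simpa using hk z
            exact hsc _ (hT.1 hTx)
          have hc₀c₁ : c₀ = c₁ := by
            obtain ⟨z, hz⟩ := hex x₀ hx₀
            have := hcomb z
            rw [hcc₁] at this
            simp only [sub_self, zero_mul, zero_add] at this
            rcases mul_eq_zero.mp this with h' | h'
            · exact sub_eq_zero.mp h'
            · exact absurd h' hz
          intro z
          rw [hP z, hcc₁, hc₀c₁]
      refine ⟨c₀⁻¹, inv_ne_zero hc₀, fun x => ?_⟩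
      ext z
      simp only [ContinuousLinearMap.smul_apply, ContinuousLinearMap.coe_comp',
        Function.comp_apply, smul_eq_mul]
      by_cases hx : x = 0
      · subst hx; simp
      · rw [hconst x hx z]
        field_simp
    · push_neg at hX
      refine ⟨1, one_ne_zero, fun x => ?_⟩
      rw [hX x]
      ext z
      simp [hX (A 0), hX z]
  · rintro ⟨lam, hlam, hE⟩ x y
    have : T x y = lam * T (A x) (A y) := by
      rw [hE x]
      simp
    rw [this]
    constructor
    · intro h0
      rcases mul_eq_zero.mp h0 with h' | h'
      · exact absurd h' hlam
      · exact h'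
    · intro h0
      rw [h0, mul_zero]
end

section
/- Let X = ℓ_p² over ℝ with 1 ≤ p ≤ ∞. Then p = 2 if and only if (α, β) is Birkhoff-James orthogonal to (β, -α) for all (α, β) ∈ ℝ². -/
theorem stmt18 (p : ENNReal) [Fact (1 ≤ p)] :
    p = 2 ↔
      ∀ α β lam : ℝ,
        ‖(WithLp.equiv p (Fin 2 → ℝ)).symm ![α, β]‖ ≤
          ‖(WithLp.equiv p (Fin 2 → ℝ)).symm ![α, β] +
            lam • (WithLp.equiv p (Fin 2 → ℝ)).symm ![β, -α]‖ := by
  constructor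
  · rintro rfl
    intro α β lam
    set u := (WithLp.equiv 2 (Fin 2 → ℝ)).symm ![α, β] with hu
    set v := (WithLp.equiv 2 (Fin 2 → ℝ)).symm ![β, -α] with hv
    have hinner : (inner ℝ u v : ℝ) = 0 := by
      simp [hu, hv, PiLp.inner_apply, Fin.sum_univ_two, WithLp.equiv_symm_apply, PiLp.toLp_apply, WithLp.ofLp_toLp]
      ring
    have h2 : ‖u + lam • v‖ ^ 2 = ‖u‖ ^ 2 + ‖lam • v‖ ^ 2 := by
      rw [norm_add_sq_real, real_inner_smul_right, hinner]; ring
    nlinarith [norm_nonneg (u + lam • v), norm_nonneg u, sq_nonneg ‖lam • v‖]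
  · intro h
    by_cases htop : p = ⊤
    · subst htop
      exfalso
      have H := h 1 2 (1/4)
      have hub : ‖(WithLp.equiv ⊤ (Fin 2 → ℝ)).symm ![(1:ℝ), 2] +
          (1/4 : ℝ) • (WithLp.equiv ⊤ (Fin 2 → ℝ)).symm ![(2:ℝ), -1]‖ ≤ 7/4 := by
        rw [PiLp.norm_eq_ciSup]
        apply ciSup_le
        intro i
        fin_cases i <;>
          simp [PiLp.add_apply, PiLp.smul_apply, WithLp.equiv_symm_apply, PiLp.toLp_apply, WithLp.ofLp_toLp,
            Real.norm_eq_abs, abs_le] <;> norm_num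
      have hlb : (2:ℝ) ≤ ‖(WithLp.equiv ⊤ (Fin 2 → ℝ)).symm ![(1:ℝ), 2]‖ := by
        rw [PiLp.norm_eq_ciSup]
        have := le_ciSup (f := fun i => ‖((WithLp.equiv ⊤ (Fin 2 → ℝ)).symm ![(1:ℝ), 2]) i‖)
          (Set.Finite.bddAbove (Set.finite_range _)) 1
        simpa [WithLp.equiv_symm_apply, PiLp.toLp_apply, WithLp.ofLp_toLp] using this
      linarith
    · -- p finite
      set pr := p.toReal with hpr
      have hpr0 : 0 < pr := (ENNReal.toReal_pos_iff_ne_top p).mpr htop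
      have hpr1 : 1 ≤ pr := by
        rw [hpr, show (1:ℝ) = (1:ENNReal).toReal by simp]
        exact (ENNReal.toReal_le_toReal (by simp) htop).mpr (Fact.out)
      set g : ℝ → ℝ := fun t => |1 + 2*t| ^ pr + |2 - t| ^ pr with hg
      have key : ∀ t, g 0 ≤ g t := by
        intro t
        have H := h 1 2 t
        rw [PiLp.norm_eq_sum hpr0, PiLp.norm_eq_sum hpr0] at H
        simp only [Fin.sum_univ_two, WithLp.equiv_symm_apply, PiLp.toLp_apply, WithLp.ofLp_toLp, PiLp.add_apply,
          PiLp.smul_apply, smul_eq_mul, Matrix.cons_val_zero, Matrix.cons_val_one,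
          Matrix.head_cons, Real.norm_eq_abs] at H
        have hA : (0:ℝ) ≤ |(1:ℝ)| ^ pr + |(2:ℝ)| ^ pr := by positivity
        have hB : (0:ℝ) ≤ |1 + t*2| ^ pr + |2 + t*(-1)| ^ pr := by positivity
        have := Real.rpow_le_rpow (by positivity) H (le_of_lt hpr0)
        rw [one_div, Real.rpow_inv_rpow hA (ne_of_gt hpr0),
          Real.rpow_inv_rpow hB (ne_of_gt hpr0)] at this
        have e1 : (1:ℝ) + t*2 = 1 + 2*t := by ring
        have e2 : (2:ℝ) + t*(-1) = 2 - t := by ring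
        rw [e1, e2] at this
        simpa [hg] using this
      have hmin : IsLocalMin g 0 := Filter.Eventually.of_forall key
      have hder : HasDerivAt g (pr * 1 ^ (pr - 1) * 2 + pr * 2 ^ (pr - 1) * (-1)) 0 := by
        have h1 : HasDerivAt (fun t : ℝ => (1 + 2*t) ^ pr) (pr * 1 ^ (pr - 1) * 2) 0 := by
          have hin : HasDerivAt (fun t : ℝ => 1 + 2*t) 2 0 := by
            simpa using ((hasDerivAt_id (0:ℝ)).const_mul 2).const_add 1
          have := (Real.hasDerivAt_rpow_const (p := pr)
            (x := (1:ℝ) + 2*0) (Or.inl (by norm_num))).comp 0 hin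
          simpa [Function.comp_def] using this
        have h2 : HasDerivAt (fun t : ℝ => (2 - t) ^ pr) (pr * 2 ^ (pr - 1) * (-1)) 0 := by
          have hin : HasDerivAt (fun t : ℝ => 2 - t) (-1) 0 := by
            simpa using (hasDerivAt_id (0:ℝ)).const_sub 2
          have := (Real.hasDerivAt_rpow_const (p := pr)
            (x := (2:ℝ) - 0) (Or.inl (by norm_num))).comp 0 hin
          simpa [Function.comp_def] using this
        have hsum := h1.add h2
        apply hsum.congr_of_eventuallyEq
        have hnb : Set.Ioo (-(1/2) : ℝ) (1/2) ∈ nhds (0:ℝ) :=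
          Ioo_mem_nhds (by norm_num) (by norm_num)
        filter_upwards [hnb] with t ht
        obtain ⟨ht1, ht2⟩ := ht
        show |1 + 2*t| ^ pr + |2 - t| ^ pr = (1 + 2*t) ^ pr + (2 - t) ^ pr
        rw [abs_of_pos (by linarith : (0:ℝ) < 1 + 2*t),
          abs_of_pos (by linarith : (0:ℝ) < 2 - t)]
      have hz := hmin.hasDerivAt_eq_zero hder
      rw [Real.one_rpow] at hz
      have h2eq : (2:ℝ) ^ (pr - 1) = 2 ^ (1:ℝ) := by
        rw [Real.rpow_one]
        have h2' : pr * 2 = pr * 2 ^ (pr - 1) := by linarith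
        exact (mul_left_cancel₀ (ne_of_gt hpr0) h2').symm
      have hpr2 : pr = 2 := by
        have := le_antisymm
          ((Real.rpow_le_rpow_left_iff (x := 2) one_lt_two).mp h2eq.le)
          ((Real.rpow_le_rpow_left_iff (x := 2) one_lt_two).mp h2eq.ge)
        linarith
      have : p.toReal = (2:ENNReal).toReal := by
        rw [← hpr, hpr2]; simp
      exact (ENNReal.toReal_eq_toReal_iff' htop (by simp)).mp this
end
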